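/- D_{K,N,H₀} is the first positive zero of the model Jacobian J_{K,N,H₀}: let N > 1 and assume either (K > 0 and H₀ ∈ ℝ), or (K = 0 and H₀ < 0), or (K < 0 and H₀ < −√(−K(N−1))). Then J_{K,N,H₀}(θ) > 0 for every θ ∈ [0, D_{K,N,H₀}), and J_{K,N,H₀}(D_{K,N,H₀}) = 0. -/

import Mathlib

noncomputable section

/-- The model Jacobian `J_{K,N,H₀}(θ)`. -/
def modelJacobian (K N H₀ θ : ℝ) : ℝ :=
  if 0 < K then
    max (Real.cos (θ * Real.sqrt (K / (N - 1))) +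
        H₀ / Real.sqrt (K * (N - 1)) * Real.sin (θ * Real.sqrt (K / (N - 1)))) 0 ^ (N - 1)
  else if K = 0 then max (1 + H₀ * θ / (N - 1)) 0 ^ (N - 1)
  else
    max (Real.cosh (θ * Real.sqrt (-K / (N - 1))) +
        H₀ / Real.sqrt (-K * (N - 1)) * Real.sinh (θ * Real.sqrt (-K / (N - 1)))) 0 ^ (N - 1)

/-- The inverse of `coth` on `(1,∞)`: `arcoth(x) = (1/2)·log((x+1)/(x−1))`. -/
def arcoth (x : ℝ) : ℝ := 1 / 2 * Real.log ((x + 1) / (x - 1))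

/-- The model diameter bound `D_{K,N,H₀}`: for `K > 0` it is
`√((N−1)/K)·arccot(−H₀/√(K(N−1)))` with `arccot x = π/2 − arctan x ∈ (0,π)`; for `K = 0`,
`(N−1)/(−H₀)`; and for `K < 0`, `√((N−1)/(−K))·arcoth(−H₀/√(−K(N−1)))`. -/
def modelDiameter (K N H₀ : ℝ) : ℝ :=
  if 0 < K then
    Real.sqrt ((N - 1) / K) * (Real.pi / 2 - Real.arctan (-H₀ / Real.sqrt (K * (N - 1))))
  else if K = 0 then (N - 1) / (-H₀)
  else Real.sqrt ((N - 1) / (-K)) * arcoth (-H₀ / Real.sqrt (-K * (N - 1)))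

private lemma trig_aux (c t : ℝ) : Real.cos t + c * Real.sin t =
    Real.sqrt (1 + c ^ 2) * Real.cos (t - Real.arctan c) := by
  have h : (0:ℝ) < Real.sqrt (1 + c ^ 2) := Real.sqrt_pos.2 (by positivity)
  rw [Real.cos_sub, Real.cos_arctan, Real.sin_arctan]
  field_simp

/-- `D_{K,N,H₀}` is the first positive zero of the model Jacobian `J_{K,N,H₀}`: the
Jacobian is positive on `[0, D_{K,N,H₀})` and vanishes at `D_{K,N,H₀}`. -/
theorem modelDiameter_first_zero (K N H₀ : ℝ) (hN : 1 < N)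
    (hcase : 0 < K ∨ (K = 0 ∧ H₀ < 0) ∨ (K < 0 ∧ H₀ < -Real.sqrt (-K * (N - 1)))) :
    (∀ θ ∈ Set.Ico 0 (modelDiameter K N H₀), 0 < modelJacobian K N H₀ θ) ∧
      modelJacobian K N H₀ (modelDiameter K N H₀) = 0 := by
  have hN1 : (0:ℝ) < N - 1 := by linarith
  have hN1' : N - 1 ≠ 0 := ne_of_gt hN1
  rcases hcase with hK | ⟨hK, hH⟩ | ⟨hK, hH⟩
  · -- K > 0
    set c : ℝ := H₀ / Real.sqrt (K * (N - 1)) with hc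
    set s : ℝ := Real.sqrt (K / (N - 1)) with hs
    have hspos : 0 < s := Real.sqrt_pos.2 (by positivity)
    have hss : Real.sqrt ((N - 1) / K) * s = 1 := by
      rw [hs, ← Real.sqrt_mul (by positivity)]
      rw [show (N - 1) / K * (K / (N - 1)) = 1 by field_simp]
      exact Real.sqrt_one
    have harc : -H₀ / Real.sqrt (K * (N - 1)) = -c := by rw [hc]; ring
    have hD : modelDiameter K N H₀ = Real.sqrt ((N - 1) / K) *
        (Real.pi / 2 + Real.arctan c) := by
      rw [modelDiameter, if_pos hK, harc, Real.arctan_neg]; ring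
    have hDs : modelDiameter K N H₀ * s = Real.pi / 2 + Real.arctan c := by
      rw [hD]; rw [mul_comm (Real.sqrt ((N-1)/K)) _, mul_assoc, hss, mul_one]
    have hJ : ∀ θ : ℝ, modelJacobian K N H₀ θ =
        max (Real.sqrt (1 + c ^ 2) * Real.cos (θ * s - Real.arctan c)) 0 ^ (N - 1) := by
      intro θ
      rw [modelJacobian, if_pos hK, ← hc, ← hs, trig_aux]
    constructor
    · rintro θ ⟨hθ0, hθD⟩
      rw [hJ]
      have h1 : -(Real.pi / 2) < θ * s - Real.arctan c := by
        have := Real.neg_pi_div_two_lt_arctan c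
        have := Real.arctan_lt_pi_div_two c
        nlinarith [mul_nonneg hθ0 hspos.le]
      have h2 : θ * s - Real.arctan c < Real.pi / 2 := by
        have : θ * s < modelDiameter K N H₀ * s :=
          mul_lt_mul_of_pos_right hθD hspos
        rw [hDs] at this; linarith
      have hcos : 0 < Real.cos (θ * s - Real.arctan c) :=
        Real.cos_pos_of_mem_Ioo ⟨h1, h2⟩
      have : 0 < Real.sqrt (1 + c ^ 2) * Real.cos (θ * s - Real.arctan c) :=
        mul_pos (Real.sqrt_pos.2 (by positivity)) hcos
      rw [max_eq_left this.le]
      exact Real.rpow_pos_of_pos this _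
    · rw [hJ, hDs]
      rw [show Real.pi / 2 + Real.arctan c - Real.arctan c = Real.pi / 2 by ring,
        Real.cos_pi_div_two, mul_zero, max_self, Real.zero_rpow hN1']
  · -- K = 0
    have hK0 : ¬ (0 < K) := by simp [hK]
    have hD : modelDiameter K N H₀ = (N - 1) / (-H₀) := by
      rw [modelDiameter, if_neg hK0, if_pos hK]
    have hJ : ∀ θ : ℝ, modelJacobian K N H₀ θ = max (1 + H₀ * θ / (N - 1)) 0 ^ (N - 1) := by
      intro θ; rw [modelJacobian, if_neg hK0, if_pos hK]
    have hH0 : H₀ ≠ 0 := ne_of_lt hH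
    have h2 : H₀ * ((N - 1) / (-H₀)) = -(N - 1) := by
      field_simp
    constructor
    · rintro θ ⟨hθ0, hθD⟩
      rw [hJ]
      rw [hD] at hθD
      have h1 : 0 < 1 + H₀ * θ / (N - 1) := by
        have hgt : H₀ * θ > H₀ * ((N - 1) / (-H₀)) := by
          rcases eq_or_lt_of_le hθ0 with h | h
          · rw [← h, mul_zero, h2]; linarith
          · exact mul_lt_mul_of_neg_left hθD hH
        rw [h2, gt_iff_lt, ← sub_pos] at hgt
        have hdp := div_pos hgt hN1
        have heq : (H₀ * θ - -(N - 1)) / (N - 1) = 1 + H₀ * θ / (N - 1) := by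
          field_simp; ring
        linarith [heq ▸ hdp]
      rw [max_eq_left h1.le]
      exact Real.rpow_pos_of_pos h1 _
    · rw [hJ, hD]
      have : 1 + H₀ * ((N - 1) / (-H₀)) / (N - 1) = 0 := by
        rw [h2]; field_simp; norm_num
      rw [this, max_self, Real.zero_rpow hN1']
  · -- K < 0
    have hK0 : ¬ (0 < K) := by linarith
    have hKne : K ≠ 0 := ne_of_lt hK
    set a : ℝ := -H₀ / Real.sqrt (-K * (N - 1)) with ha
    have hsq : 0 < Real.sqrt (-K * (N - 1)) := Real.sqrt_pos.2 (by nlinarith)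
    have ha1 : 1 < a := by
      rw [ha, lt_div_iff₀ hsq, one_mul]
      linarith
    set s : ℝ := Real.sqrt (-K / (N - 1)) with hs
    have hspos : 0 < s := Real.sqrt_pos.2 (div_pos (by linarith) hN1)
    have hss : Real.sqrt ((N - 1) / (-K)) * s = 1 := by
      rw [hs, ← Real.sqrt_mul (le_of_lt (div_pos hN1 (by linarith)))]
      rw [show (N - 1) / (-K) * (-K / (N - 1)) = 1 by field_simp]
      exact Real.sqrt_one
    set T : ℝ := arcoth a with hT
    have hDs : modelDiameter K N H₀ * s = T := by
      rw [modelDiameter, if_neg hK0, if_neg hKne, ← ha, ← hT,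
        mul_comm (Real.sqrt ((N-1)/(-K))) T, mul_assoc, hss, mul_one]
    have hfrac : (0:ℝ) < (a + 1) / (a - 1) := by
      apply div_pos <;> linarith
    have hexp2T : Real.exp (2 * T) = (a + 1) / (a - 1) := by
      rw [hT, arcoth, show 2 * (1 / 2 * Real.log ((a + 1) / (a - 1))) =
        Real.log ((a + 1) / (a - 1)) by ring, Real.exp_log hfrac]
    have hc : H₀ / Real.sqrt (-K * (N - 1)) = -a := by rw [ha]; ring
    have hJ : ∀ θ : ℝ, modelJacobian K N H₀ θ =
        max (Real.cosh (θ * s) + (-a) * Real.sinh (θ * s)) 0 ^ (N - 1) := by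
      intro θ; rw [modelJacobian, if_neg hK0, if_neg hKne, ← hs, hc]
    have hf : ∀ t : ℝ, Real.cosh t + (-a) * Real.sinh t =
        ((1 + a) - (a - 1) * Real.exp (2 * t)) / (2 * Real.exp t) := by
      intro t
      rw [Real.cosh_eq, Real.sinh_eq, Real.exp_neg,
        show 2 * t = t + t by ring, Real.exp_add]
      have := Real.exp_pos t
      field_simp
      ring
    constructor
    · rintro θ ⟨hθ0, hθD⟩
      rw [hJ, hf]
      have hts : θ * s < T := by
        have := mul_lt_mul_of_pos_right hθD hspos
        rwa [hDs] at this
      have hlt : Real.exp (2 * (θ * s)) < (a + 1) / (a - 1) := by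
        rw [← hexp2T]
        exact Real.exp_lt_exp.2 (by linarith)
      have hnum : 0 < (1 + a) - (a - 1) * Real.exp (2 * (θ * s)) := by
        have := (lt_div_iff₀ (by linarith : (0:ℝ) < a - 1)).1 hlt
        nlinarith
      have hpos : 0 < ((1 + a) - (a - 1) * Real.exp (2 * (θ * s))) /
          (2 * Real.exp (θ * s)) :=
        div_pos hnum (by positivity)
      rw [max_eq_left hpos.le]
      exact Real.rpow_pos_of_pos hpos _
    · rw [hJ, hf, hDs]
      have : (1 + a) - (a - 1) * Real.exp (2 * T) = 0 := by
        rw [hexp2T, mul_comm, div_mul_cancel₀ _ (by linarith : a - 1 ≠ 0)]; ring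
      rw [this, zero_div, max_self, Real.zero_rpow hN1']
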